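/- The function f(x) = x/tanh(x) − log(cosh(x))/tanh(x)² is strictly increasing on (0, ∞), with f(x) → 1/2 as x → 0⁺ and f(x) → log 2 as x → ∞. -/

import Mathlib

noncomputable def f (x : ℝ) : ℝ :=
  x / Real.tanh x - Real.log (Real.cosh x) / Real.tanh x ^ 2

open Real Set Filter


lemma tanh_def (x : ℝ) : Real.tanh x = Real.sinh x / Real.cosh x := Real.tanh_eq_sinh_div_cosh x

lemma tanh_pos' {x : ℝ} (hx : 0 < x) : 0 < Real.tanh x := by
  rw [tanh_def]; exact div_pos (Real.sinh_pos_iff.2 hx) (Real.cosh_pos x)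

lemma one_sub_tanh_sq (x : ℝ) : 1 - Real.tanh x ^ 2 = 1 / Real.cosh x ^ 2 := by
  rw [tanh_def]
  rw [div_pow]
  field_simp
  exact Real.cosh_sq_sub_sinh_sq x

lemma one_sub_tanh_sq_pos (x : ℝ) : 0 < 1 - Real.tanh x ^ 2 := by
  rw [one_sub_tanh_sq]; positivity

lemma hasDerivAt_tanh' (x : ℝ) : HasDerivAt Real.tanh (1 - Real.tanh x ^ 2) x := by
  have h := (Real.hasDerivAt_sinh x).div (Real.hasDerivAt_cosh x) (Real.cosh_pos x).ne'
  have : (fun x => Real.sinh x / Real.cosh x) = Real.tanh := by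
    funext y; rw [tanh_def]
  rw [show (Real.sinh / Real.cosh) = Real.tanh from this] at h
  refine h.congr_deriv ?_
  rw [one_sub_tanh_sq]
  have h2 := Real.cosh_sq_sub_sinh_sq x
  field_simp
  linarith

lemma hasDerivAt_logcosh (x : ℝ) : HasDerivAt (fun y => Real.log (Real.cosh y)) (Real.tanh x) x := by
  have h := (Real.hasDerivAt_cosh x).log (Real.cosh_pos x).ne'
  rwa [← tanh_def] at h

noncomputable def hh (x : ℝ) : ℝ := Real.tanh x - x * (1 - Real.tanh x ^ 2)

lemma hasDerivAt_hh (x : ℝ) :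
    HasDerivAt hh (2 * x * Real.tanh x * (1 - Real.tanh x ^ 2)) x := by
  have h1 : HasDerivAt (fun y : ℝ => y * (1 - Real.tanh y ^ 2))
      (1 * (1 - Real.tanh x ^ 2) + x * (0 - 2 * Real.tanh x ^ 1 * (1 - Real.tanh x ^ 2))) x :=
    (hasDerivAt_id x).mul ((hasDerivAt_const x 1).sub ((hasDerivAt_tanh' x).pow 2))
  have h := (hasDerivAt_tanh' x).sub h1
  refine h.congr_deriv ?_
  ring

lemma hh_pos {x : ℝ} (hx : 0 < x) : 0 < hh x := by
  have mono : StrictMonoOn hh (Ici 0) := by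
    apply strictMonoOn_of_deriv_pos (convex_Ici 0)
    · exact (Differentiable.continuous fun y => (hasDerivAt_hh y).differentiableAt).continuousOn
    · intro y hy
      rw [interior_Ici] at hy
      rw [(hasDerivAt_hh y).deriv]
      have h0 : 0 < y := hy
      have h1 := tanh_pos' hy
      have h2 := one_sub_tanh_sq_pos y
      positivity
  have h0 : hh 0 = 0 := by simp [hh]
  have := mono (self_mem_Ici) (le_of_lt hx : (0:ℝ) ≤ x) hx
  rwa [h0] at this

noncomputable def gg (x : ℝ) : ℝ := 2 * Real.log (Real.cosh x) - x * Real.tanh x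

lemma hasDerivAt_gg (x : ℝ) : HasDerivAt gg (hh x) x := by
  have h1 : HasDerivAt (fun y : ℝ => 2 * Real.log (Real.cosh y)) (2 * Real.tanh x) x :=
    (hasDerivAt_logcosh x).const_mul 2
  have h2 : HasDerivAt (fun y : ℝ => y * Real.tanh y)
      (1 * Real.tanh x + x * (1 - Real.tanh x ^ 2)) x :=
    (hasDerivAt_id x).mul (hasDerivAt_tanh' x)
  have h := h1.sub h2
  refine h.congr_deriv ?_
  unfold hh
  ring

lemma gg_pos {x : ℝ} (hx : 0 < x) : 0 < gg x := by
  have mono : StrictMonoOn gg (Ici 0) := by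
    apply strictMonoOn_of_deriv_pos (convex_Ici 0)
    · exact (Differentiable.continuous fun y => (hasDerivAt_gg y).differentiableAt).continuousOn
    · intro y hy
      rw [interior_Ici] at hy
      rw [(hasDerivAt_gg y).deriv]
      exact hh_pos hy
  have h0 : gg 0 = 0 := by simp [gg]
  have := mono (self_mem_Ici) (le_of_lt hx : (0:ℝ) ≤ x) hx
  rwa [h0] at this

lemma hasDerivAt_f {x : ℝ} (hx : 0 < x) :
    HasDerivAt f ((1 - Real.tanh x ^ 2) * gg x / Real.tanh x ^ 3) x := by
  have ht := (tanh_pos' hx).ne'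
  have A := (hasDerivAt_id x).div (hasDerivAt_tanh' x) ht
  have B := (hasDerivAt_logcosh x).div ((hasDerivAt_tanh' x).pow 2) (pow_ne_zero 2 ht)
  have h := A.sub B
  have hf : f = fun y => y / Real.tanh y - Real.log (Real.cosh y) / Real.tanh y ^ 2 := rfl
  rw [hf]
  refine h.congr_deriv ?_
  unfold gg
  simp only [id, Pi.pow_apply]
  field_simp
  ring

lemma f_mono : StrictMonoOn f (Set.Ioi 0) := by
  apply strictMonoOn_of_deriv_pos (convex_Ioi 0)
  · intro x hx
    exact ((hasDerivAt_f hx).differentiableAt.continuousAt).continuousWithinAt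
  · intro x hx
    rw [interior_Ioi] at hx
    rw [(hasDerivAt_f hx).deriv]
    have h1 := one_sub_tanh_sq_pos x
    have h2 := gg_pos hx
    have h3 := tanh_pos' hx
    positivity

lemma continuous_tanh' : Continuous Real.tanh := by
  have : Real.tanh = fun x => Real.sinh x / Real.cosh x := funext tanh_def
  rw [this]
  exact Real.continuous_sinh.div Real.continuous_cosh fun x => (Real.cosh_pos x).ne'

lemma f_eq_div {x : ℝ} (hx : 0 < x) :
    f x = (x * Real.tanh x - Real.log (Real.cosh x)) / Real.tanh x ^ 2 := by
  have ht := (tanh_pos' hx).ne'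
  unfold f
  field_simp

lemma tendsto_div_tanh_zero :
    Tendsto (fun x => x / Real.tanh x) (nhdsWithin 0 (Set.Ioi 0)) (nhds 1) := by
  have h := hasDerivAt_tanh' 0
  rw [hasDerivAt_iff_tendsto_slope] at h
  simp only [Real.tanh_zero, one_pow] at h
  norm_num at h
  have h2 : Tendsto (slope Real.tanh 0) (nhdsWithin 0 (Set.Ioi 0)) (nhds 1) :=
    h.mono_left (nhdsWithin_mono 0 (fun x hx => ne_of_gt hx))
  have h3 : Tendsto (fun x => Real.tanh x / x) (nhdsWithin 0 (Set.Ioi 0)) (nhds 1) := by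
    refine h2.congr' ?_
    filter_upwards [self_mem_nhdsWithin] with x hx
    simp [slope_def_field, div_eq_div_iff]
  have h4 := h3.inv₀ (by norm_num)
  norm_num at h4
  refine h4.congr' ?_
  filter_upwards with x
  rw [← inv_div]

lemma tendsto_f_zero : Tendsto f (nhdsWithin 0 (Set.Ioi 0)) (nhds (1/2)) := by
  have key : Tendsto (fun x => (x * Real.tanh x - Real.log (Real.cosh x)) / Real.tanh x ^ 2)
      (nhdsWithin 0 (Set.Ioi 0)) (nhds (1/2)) := by
    apply HasDerivAt.lhopital_zero_nhdsGT
      (f' := fun x => x * (1 - Real.tanh x ^ 2))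
      (g' := fun x => 2 * Real.tanh x ^ 1 * (1 - Real.tanh x ^ 2))
    · filter_upwards with x
      have h1 : HasDerivAt (fun y : ℝ => y * Real.tanh y)
          (1 * Real.tanh x + x * (1 - Real.tanh x ^ 2)) x :=
        (hasDerivAt_id x).mul (hasDerivAt_tanh' x)
      have h := h1.sub (hasDerivAt_logcosh x)
      refine h.congr_deriv ?_
      ring
    · filter_upwards with x
      exact (hasDerivAt_tanh' x).pow 2
    · filter_upwards [self_mem_nhdsWithin] with x hx
      have h1 := tanh_pos' hx
      have h2 := one_sub_tanh_sq_pos x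
      positivity
    · have hc : Continuous (fun x => x * Real.tanh x - Real.log (Real.cosh x)) := by
        exact (continuous_id.mul continuous_tanh').sub
          (Differentiable.continuous fun y => (hasDerivAt_logcosh y).differentiableAt)
      have := hc.tendsto 0
      simp at this
      exact this.mono_left nhdsWithin_le_nhds
    · have hc : Continuous (fun x => Real.tanh x ^ 2) := continuous_tanh'.pow 2
      have := hc.tendsto 0
      simp at this
      exact this.mono_left nhdsWithin_le_nhds
    · have h := (tendsto_div_tanh_zero.div_const 2)
      have : (1:ℝ)/2 = 1/2 := rfl
      refine h.congr' ?_
      filter_upwards [self_mem_nhdsWithin] with x hx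
      have h1 := (tanh_pos' hx).ne'
      have h2 := (one_sub_tanh_sq_pos x).ne'
      field_simp
  refine key.congr' ?_
  filter_upwards [self_mem_nhdsWithin] with x hx
  exact (f_eq_div hx).symm

lemma exp_neg_two (x : ℝ) : Real.exp (-(2*x)) = Real.exp (-x) * Real.exp (-x) := by
  rw [← Real.exp_add]; ring_nf

lemma tanh_formula (x : ℝ) :
    Real.tanh x = (1 - Real.exp (-(2*x))) / (1 + Real.exp (-(2*x))) := by
  rw [tanh_def, Real.sinh_eq, Real.cosh_eq, exp_neg_two]
  have h1 := Real.exp_ne_zero x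
  have h2 : Real.exp (-x) = (Real.exp x)⁻¹ := Real.exp_neg x
  rw [h2]
  field_simp

lemma tendsto_u : Tendsto (fun x : ℝ => Real.exp (-(2*x))) atTop (nhds 0) := by
  apply Real.tendsto_exp_atBot.comp
  apply tendsto_neg_atTop_atBot.comp
  exact Tendsto.const_mul_atTop two_pos tendsto_id

lemma tendsto_tanh_atTop : Tendsto Real.tanh atTop (nhds 1) := by
  have h : Tendsto (fun x : ℝ => (1 - Real.exp (-(2*x))) / (1 + Real.exp (-(2*x))))
      atTop (nhds ((1-0)/(1+0))) :=
    ((tendsto_const_nhds.sub tendsto_u).div (tendsto_const_nhds.add tendsto_u) (by norm_num))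
  norm_num at h
  exact h.congr fun x => (tanh_formula x).symm

lemma tendsto_term1 : Tendsto (fun x : ℝ => x * (Real.tanh x - 1)) atTop (nhds 0) := by
  have hxe : Tendsto (fun x : ℝ => x * Real.exp (-(2*x))) atTop (nhds 0) := by
    have h := (Real.tendsto_pow_mul_exp_neg_atTop_nhds_zero 1).comp
      (Tendsto.const_mul_atTop two_pos (tendsto_id (α := ℝ)))
    have h2 := h.div_const 2
    norm_num at h2
    refine h2.congr fun x => ?_
    ring
  have key : Tendsto (fun x : ℝ => (-2 * (x * Real.exp (-(2*x)))) / (1 + Real.exp (-(2*x))))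
      atTop (nhds ((-2 * 0)/(1+0))) :=
    ((hxe.const_mul (-2)).div (tendsto_const_nhds.add tendsto_u) (by norm_num))
  norm_num at key
  refine key.congr fun x => ?_
  have hpos : (0:ℝ) < 1 + Real.exp (-(2*x)) := by positivity
  rw [tanh_formula]
  field_simp
  ring

lemma logcosh_formula (x : ℝ) :
    Real.log (Real.cosh x) = x + Real.log (1 + Real.exp (-(2*x))) - Real.log 2 := by
  have hc : Real.cosh x = Real.exp x * (1 + Real.exp (-(2*x))) / 2 := by
    rw [Real.cosh_eq, exp_neg_two]
    have h2 : Real.exp (-x) = (Real.exp x)⁻¹ := Real.exp_neg x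
    rw [h2]
    have h1 := Real.exp_ne_zero x
    field_simp
  rw [hc]
  have hp : (0:ℝ) < 1 + Real.exp (-(2*x)) := by positivity
  rw [Real.log_div (by positivity) (by norm_num), Real.log_mul (Real.exp_ne_zero x) hp.ne',
    Real.log_exp]

lemma tendsto_term2 : Tendsto (fun x : ℝ => x - Real.log (Real.cosh x)) atTop (nhds (Real.log 2)) := by
  have h1 : Tendsto (fun x : ℝ => Real.log (1 + Real.exp (-(2*x)))) atTop (nhds 0) := by
    have hadd : Tendsto (fun x : ℝ => 1 + Real.exp (-(2*x))) atTop (nhds 1) := by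
      have := (tendsto_const_nhds (x := (1:ℝ)) (f := atTop (α := ℝ))).add tendsto_u
      norm_num at this
      exact this
    have := (Real.continuousAt_log (by norm_num : (1:ℝ) ≠ 0)).tendsto.comp hadd
    simpa [Function.comp_def] using this
  have h := (tendsto_const_nhds (x := Real.log 2) (f := atTop (α := ℝ))).sub h1
  norm_num at h
  refine h.congr fun x => ?_
  rw [logcosh_formula]
  ring

lemma tendsto_f_atTop : Tendsto f atTop (nhds (Real.log 2)) := by
  have hN : Tendsto (fun x : ℝ => x * Real.tanh x - Real.log (Real.cosh x)) atTop
      (nhds (Real.log 2)) := by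
    have h := tendsto_term1.add tendsto_term2
    norm_num at h
    refine h.congr fun x => ?_
    ring
  have hD : Tendsto (fun x : ℝ => Real.tanh x ^ 2) atTop (nhds 1) := by
    have := tendsto_tanh_atTop.pow 2
    norm_num at this
    exact this
  have h := hN.div hD (by norm_num)
  norm_num at h
  refine h.congr' ?_
  filter_upwards [eventually_gt_atTop 0] with x hx
  exact (f_eq_div hx).symm

theorem stmt_15 :
    StrictMonoOn f (Set.Ioi 0) ∧
    Filter.Tendsto f (nhdsWithin 0 (Set.Ioi 0)) (nhds (1 / 2)) ∧
    Filter.Tendsto f Filter.atTop (nhds (Real.log 2)) := by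
  exact ⟨f_mono, tendsto_f_zero, tendsto_f_atTop⟩
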